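/- Let E be a Polish metric space with metric d (equipped with its Borel σ-algebra), F a measurable space, k ≥ 1, and f : E × F × ℝ^k → E jointly measurable. Let m_ε be a probability measure on ℝ^k, and for x ∈ F let P_x be the Markov kernel on E given by P_x(y,A) = m_ε{e : f(y,x,e) ∈ A}. Suppose: (Assumption D) there are ρ ∈ (0,1) and R > 0 with d(f(y₁,x,e), f(y₂,x,e)) ≤ ρ·d(y₁,y₂) + R for all y₁,y₂ ∈ E, x ∈ F, e ∈ ℝ^k; (Assumption M) there are a function η : F → (0,1], a constant K > 0, and a jointly measurable family of probability measures ν(x,y₁,y₂) on E such that for all y₁,y₂ ∈ E with 0 < d(y₁,y₂) ≤ 2R/(1−ρ), all x ∈ F, all Borel A ⊆ E and i = 1,2: P_x(y_i,A) ≥ η(x)·ν(x,y₁,y₂)(A) and ν(x,y₁,y₂)(B_K(y_i)) = 1. Set ρ' = (1+ρ)/2 and R' = 2R/(1−ρ), and let N be a positive integer with ρ'^{N−1} ≤ R'/(4R'+4K). Then for every n ≥ 2, every x₀,…,x_{n−1} ∈ F, every y, y' ∈ E and every Borel set A ⊆ E, |δ_y P_{x₀}⋯P_{x_{n−1}}(A)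 − δ_{y'} P_{x₀}⋯P_{x_{n−1}}(A)| ≤ 1_{d(y,y') ≥ R'/ρ'^{⌊n/2⌋}} + ∏_{k=1}^{k*(n)} (1 − η(x_{⌊n/2⌋ + kN − 1})), where k*(n) = ⌊⌈n/2⌉/N⌋. -/

import Mathlib

open MeasureTheory

/-- `mcreIter f mEps x n y = δ_y P_{x 0} ⋯ P_{x (n-1)}`: the law after `n` steps of the
Markov chain in the frozen environment `x 0, …, x (n-1)`, started at `y`, where the
one-step kernel is `P_x(y, A) = mEps {e | f y x e ∈ A}`. -/
noncomputable def mcreIter {E F : Type*} [MeasurableSpace E] {k : ℕ}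
    (f : E → F → (Fin k → ℝ) → E) (mEps : Measure (Fin k → ℝ)) (x : ℕ → F) :
    ℕ → E → Measure E
  | 0, y => Measure.dirac y
  | n+1, y => (mcreIter f mEps x n y).bind
      fun z => Measure.map (fun e => f z (x n) e) mEps

open scoped ENNReal

set_option linter.unusedSectionVars false

namespace Stmt14Aux

variable {E : Type*} [MeasurableSpace E] {F : Type*} {k : ℕ}

/-- Backward value iteration: `valIt f mEps g x m z = E[g(Z_m) | Z_0 = z]` in environment `x`. -/
noncomputable def valIt (f : E → F → (Fin k → ℝ) → E) (mEps : Measure (Fin k → ℝ))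
    (g : E → ℝ≥0∞) : (ℕ → F) → ℕ → E → ℝ≥0∞
  | _, 0, z => g z
  | x, m+1, z => ∫⁻ e, valIt f mEps g (fun i => x (i+1)) m (f z (x 0) e) ∂mEps

variable {f : E → F → (Fin k → ℝ) → E} {mEps : Measure (Fin k → ℝ)}

lemma measurable_slice [MeasurableSpace F]
    (hf : Measurable fun p : E × F × (Fin k → ℝ) => f p.1 p.2.1 p.2.2) (x0 : F) :
    Measurable fun p : E × (Fin k → ℝ) => f p.1 x0 p.2 :=
  hf.comp (measurable_fst.prodMk ((measurable_const).prodMk measurable_snd))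

lemma measurable_slice' [MeasurableSpace F]
    (hf : Measurable fun p : E × F × (Fin k → ℝ) => f p.1 p.2.1 p.2.2) (z : E) (x0 : F) :
    Measurable fun e => f z x0 e :=
  (measurable_slice hf x0).comp (measurable_const.prodMk measurable_id)

lemma valIt_measurable [MeasurableSpace F] [SFinite mEps]
    (hf : Measurable fun p : E × F × (Fin k → ℝ) => f p.1 p.2.1 p.2.2)
    {g : E → ℝ≥0∞} (hg : Measurable g) :
    ∀ (m : ℕ) (x : ℕ → F), Measurable (valIt f mEps g x m) := by
  intro m
  induction m with
  | zero => intro x; exact hg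
  | succ m ih =>
    intro x
    have h1 : Measurable fun p : E × (Fin k → ℝ) =>
        valIt f mEps g (fun i => x (i+1)) m (f p.1 (x 0) p.2) :=
      (ih _).comp (measurable_slice hf (x 0))
    exact h1.lintegral_prod_right'

lemma valIt_le_one [IsProbabilityMeasure mEps] {g : E → ℝ≥0∞} (hg : ∀ z, g z ≤ 1) :
    ∀ (m : ℕ) (x : ℕ → F) (z : E), valIt f mEps g x m z ≤ 1 := by
  intro m
  induction m with
  | zero => intro x z; exact hg z
  | succ m ih =>
    intro x z
    calc valIt f mEps g x (m+1) z
        = ∫⁻ e, valIt f mEps g (fun i => x (i+1)) m (f z (x 0) e) ∂mEps := rfl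
      _ ≤ ∫⁻ _, 1 ∂mEps := lintegral_mono fun e => ih _ _
      _ = 1 := by simp

lemma valIt_succ_last {g : E → ℝ≥0∞} :
    ∀ (m : ℕ) (x : ℕ → F) (z : E), valIt f mEps g x (m+1) z
      = valIt f mEps (fun w => ∫⁻ e, g (f w (x m) e) ∂mEps) x m z := by
  intro m
  induction m with
  | zero => intro x z; rfl
  | succ m ih =>
    intro x z
    show (∫⁻ e, valIt f mEps g (fun i => x (i+1)) (m+1) (f z (x 0) e) ∂mEps) = _
    simp_rw [ih (fun i => x (i+1))]
    rfl

lemma measurable_mapStep [MeasurableSpace F] [SFinite mEps]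
    (hf : Measurable fun p : E × F × (Fin k → ℝ) => f p.1 p.2.1 p.2.2) (x0 : F) :
    Measurable fun z : E => Measure.map (fun e => f z x0 e) mEps := by
  apply Measure.measurable_of_measurable_coe
  intro s hs
  have hT : MeasurableSet ((fun p : E × (Fin k → ℝ) => f p.1 x0 p.2) ⁻¹' s) :=
    (measurable_slice hf x0) hs
  have := measurable_measure_prodMk_left (ν := mEps) hT
  convert this using 1
  funext z
  rw [Measure.map_apply (measurable_slice' hf z x0) hs]
  rfl

lemma mcreIter_lintegral [MeasurableSpace F] [IsProbabilityMeasure mEps]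
    (hf : Measurable fun p : E × F × (Fin k → ℝ) => f p.1 p.2.1 p.2.2) :
    ∀ (m : ℕ) (x : ℕ → F) (y : E) (g : E → ℝ≥0∞), Measurable g →
      ∫⁻ z, g z ∂(mcreIter f mEps x m y) = valIt f mEps g x m y := by
  intro m
  induction m with
  | zero =>
    intro x y g hg
    show ∫⁻ z, g z ∂(Measure.dirac y) = g y
    exact lintegral_dirac' y hg
  | succ m ih =>
    intro x y g hg
    show ∫⁻ z, g z ∂((mcreIter f mEps x m y).bind fun z =>
        Measure.map (fun e => f z (x m) e) mEps) = _
    rw [Measure.lintegral_bind (measurable_mapStep hf (x m)).aemeasurable hg.aemeasurable]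
    have h1 : ∀ z : E, ∫⁻ w, g w ∂(Measure.map (fun e => f z (x m) e) mEps)
        = ∫⁻ e, g (f z (x m) e) ∂mEps := fun z =>
      lintegral_map hg (measurable_slice' hf z (x m))
    simp_rw [h1]
    have hg' : Measurable fun z : E => ∫⁻ e, g (f z (x m) e) ∂mEps := by
      have : Measurable fun p : E × (Fin k → ℝ) => g (f p.1 (x m) p.2) :=
        hg.comp (measurable_slice hf (x m))
      exact this.lintegral_prod_right'
    rw [ih x y (fun z => ∫⁻ e, g (f z (x m) e) ∂mEps) hg']
    exact (valIt_succ_last m x y).symm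

lemma mcreIter_apply_eq [MeasurableSpace F] [IsProbabilityMeasure mEps]
    (hf : Measurable fun p : E × F × (Fin k → ℝ) => f p.1 p.2.1 p.2.2)
    {A : Set E} (hA : MeasurableSet A) (m : ℕ) (x : ℕ → F) (y : E) :
    mcreIter f mEps x m y A = valIt f mEps (A.indicator 1) x m y := by
  rw [← lintegral_indicator_one hA, mcreIter_lintegral hf m x y _ (measurable_one.indicator hA)]


lemma valIt_step (f : E → F → (Fin k → ℝ) → E) (mEps : Measure (Fin k → ℝ))
    (g : E → ℝ≥0∞) (x' : ℕ → F) (m : ℕ) (z : E) :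
    valIt f mEps g x' (m+1) z
      = ∫⁻ e, valIt f mEps g (fun i => x' (i+1)) m (f z (x' 0) e) ∂mEps := rfl

end Stmt14Aux

section StepB

open ProbabilityTheory
set_option maxHeartbeats 1000000

namespace Stmt14Aux


lemma compProd_mono_left {α β : Type*} [MeasurableSpace α] [MeasurableSpace β]
    {μ ν : Measure α} [SFinite μ] [SFinite ν] (κ : Kernel α β) [IsSFiniteKernel κ]
    (h : μ ≤ ν) : μ ⊗ₘ κ ≤ ν ⊗ₘ κ := by
  refine Measure.le_iff.mpr fun s hs => ?_
  rw [Measure.compProd_apply hs, Measure.compProd_apply hs]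
  exact lintegral_mono' h le_rfl

variable {E : Type*} [MetricSpace E] [PolishSpace E] [MeasurableSpace E] [BorelSpace E]
  {F : Type*} [MeasurableSpace F] {k : ℕ}
  {f : E → F → (Fin k → ℝ) → E} {mEps : Measure (Fin k → ℝ)}

lemma measurable_sliceB
    (hf : Measurable fun p : E × F × (Fin k → ℝ) => f p.1 p.2.1 p.2.2) (x0 : F) :
    Measurable fun p : E × (Fin k → ℝ) => f p.1 x0 p.2 :=
  hf.comp (measurable_fst.prodMk ((measurable_const).prodMk measurable_snd))

lemma measurable_sliceB'
    (hf : Measurable fun p : E × F × (Fin k → ℝ) => f p.1 p.2.1 p.2.2) (z : E) (x0 : F) :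
    Measurable fun e => f z x0 e :=
  (measurable_sliceB hf x0).comp (measurable_const.prodMk measurable_id)

lemma stepB [IsProbabilityMeasure mEps]
    (hf : Measurable fun p : E × F × (Fin k → ℝ) => f p.1 p.2.1 p.2.2)
    {ρ R : ℝ} (hρ0 : 0 < ρ) (hρ1 : ρ < 1) (hR : 0 < R)
    {K : ℝ} (hK : 0 < K)
    {x : F} {ηx : ℝ} (hη0 : 0 < ηx) (hη1 : ηx ≤ 1)
    {νx : Measure E} [IsProbabilityMeasure νx]
    {z1 z2 : E} (hdR : dist z1 z2 ≤ 2*R/(1-ρ))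
    (hDz : ∀ e, dist (f z1 x e) (f z2 x e) ≤ ρ * dist z1 z2 + R)
    (hm1 : ∀ A : Set E, MeasurableSet A →
      ENNReal.ofReal ηx * νx A ≤ Measure.map (fun e => f z1 x e) mEps A)
    (hm2 : ∀ A : Set E, MeasurableSet A →
      ENNReal.ofReal ηx * νx A ≤ Measure.map (fun e => f z2 x e) mEps A)
    (hb2 : νx (Metric.closedBall z2 K) = 1)
    {ψ : E → ℝ≥0∞} (hψ : Measurable ψ) (hψ1 : ∀ z, ψ z ≤ 1)
    {c : ℝ≥0∞} (hc : c ≠ ∞)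
    (hmod : ∀ w1 w2 : E, dist w1 w2 ≤ 2*((2*R/(1-ρ)) + K) → ψ w1 ≤ ψ w2 + c) :
    ∫⁻ e, ψ (f z1 x e) ∂mEps
      ≤ (∫⁻ e, ψ (f z2 x e) ∂mEps) + (1 - ENNReal.ofReal ηx) * c := by
  have h1ρ : (0:ℝ) < 1 - ρ := by linarith
  set R' : ℝ := 2*R/(1-ρ) with hR'def
  have hR' : 0 < R' := div_pos (by linarith) h1ρ
  have hR'eq : (1-ρ) * R' = 2*R := by
    rw [hR'def]; field_simp
  set θ : ℝ≥0∞ := ENNReal.ofReal ηx with hθdef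
  have hθ1 : θ ≤ 1 := by
    rw [hθdef]; exact ENNReal.ofReal_le_one.mpr hη1
  set μ1 := Measure.map (fun e => f z1 x e) mEps with hμ1def
  set μ2 := Measure.map (fun e => f z2 x e) mEps with hμ2def
  haveI : IsProbabilityMeasure μ1 := Measure.isProbabilityMeasure_map (measurable_sliceB' hf z1 x).aemeasurable
  haveI : IsProbabilityMeasure μ2 := Measure.isProbabilityMeasure_map (measurable_sliceB' hf z2 x).aemeasurable
  set νm : Measure E := θ • νx with hνmdef
  haveI : IsFiniteMeasure νm := by
    refine ⟨?_⟩
    rw [hνmdef]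
    simp only [Measure.smul_apply, smul_eq_mul, measure_univ, mul_one]
    exact lt_of_le_of_lt hθ1 ENNReal.one_lt_top
  have hle1 : νm ≤ μ1 := by
    refine Measure.le_iff.mpr fun s hs => ?_
    simpa [hνmdef, Measure.smul_apply, smul_eq_mul] using hm1 s hs
  have hle2 : νm ≤ μ2 := by
    refine Measure.le_iff.mpr fun s hs => ?_
    simpa [hνmdef, Measure.smul_apply, smul_eq_mul] using hm2 s hs
  have hνmuniv : νm Set.univ = θ := by
    rw [hνmdef]; simp
  set res1 := μ1 - νm with hres1def
  set res2 := μ2 - νm with hres2def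
  have hres1 : res1 + νm = μ1 := Measure.sub_add_cancel_of_le hle1
  have hres2 : res2 + νm = μ2 := Measure.sub_add_cancel_of_le hle2
  haveI : IsFiniteMeasure res1 :=
    ⟨lt_of_le_of_lt (Measure.le_iff'.mp Measure.sub_le Set.univ) (measure_lt_top μ1 _)⟩
  haveI : IsFiniteMeasure res2 :=
    ⟨lt_of_le_of_lt (Measure.le_iff'.mp Measure.sub_le Set.univ) (measure_lt_top μ2 _)⟩
  have hres1U : res1 Set.univ = 1 - θ := by
    rw [hres1def, Measure.sub_apply MeasurableSet.univ hle1, hνmuniv, measure_univ]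
  have hres2U : res2 Set.univ = 1 - θ := by
    rw [hres2def, Measure.sub_apply MeasurableSet.univ hle2, hνmuniv, measure_univ]
  have hpair : Measurable fun e => (f z1 x e, f z2 x e) :=
    (measurable_sliceB' hf z1 x).prodMk (measurable_sliceB' hf z2 x)
  set γ := Measure.map (fun e => (f z1 x e, f z2 x e)) mEps with hγdef
  haveI : IsProbabilityMeasure γ := Measure.isProbabilityMeasure_map hpair.aemeasurable
  have hγfst : γ.fst = μ1 := by
    rw [hγdef, Measure.fst, Measure.map_map measurable_fst hpair]; rfl
  have hγsnd : γ.snd = μ2 := by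
    rw [hγdef, Measure.snd, Measure.map_map measurable_snd hpair]; rfl
  haveI : Nonempty E := ⟨z1⟩
  set κ := γ.condKernel with hκdef
  have hdis : res1 ⊗ₘ κ + νm ⊗ₘ κ = γ := by
    rw [← Measure.compProd_add_left, hres1, ← hγfst, hκdef]
    exact Measure.IsCondKernel.disintegrate
  set γ1 := res1 ⊗ₘ κ with hγ1def
  set mν := νm ⊗ₘ κ with hmνdef
  have hγ1le : γ1 ≤ γ := by rw [← hdis]; exact Measure.le_add_right le_rfl
  have hmνle : mν ≤ γ := by rw [← hdis]; exact Measure.le_add_left le_rfl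
  haveI : IsFiniteMeasure γ1 :=
    ⟨lt_of_le_of_lt (Measure.le_iff'.mp hγ1le Set.univ) (measure_lt_top γ _)⟩
  haveI : IsFiniteMeasure mν :=
    ⟨lt_of_le_of_lt (Measure.le_iff'.mp hmνle Set.univ) (measure_lt_top γ _)⟩
  set β := γ1.snd with hβdef
  have hfstγ1 : γ1.fst = res1 := Measure.fst_compProd res1 κ
  have hmνfst : mν.fst = νm := Measure.fst_compProd νm κ
  have hβsum : β + mν.snd = μ2 := by
    rw [hβdef, ← hγsnd, ← hdis]
    simp [Measure.snd, Measure.map_add _ _ measurable_snd]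
  have hβU : β Set.univ = 1 - θ := by
    rw [hβdef, Measure.snd_univ, ← Measure.fst_univ, hfstγ1, hres1U]
  haveI : IsFiniteMeasure β :=
    ⟨by rw [hβU]; exact lt_of_le_of_lt tsub_le_self ENNReal.one_lt_top⟩
  haveI : IsFiniteMeasure mν.snd :=
    ⟨by rw [Measure.snd_univ]; exact measure_lt_top mν _⟩
  -- densities
  set ω := β + res2 + νm + mν.snd with hωdef
  have hβω : β ≤ ω := by
    rw [hωdef]
    exact Measure.le_add_right (Measure.le_add_right (Measure.le_add_right le_rfl))
  have hrω : res2 ≤ ω := by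
    rw [hωdef]
    exact Measure.le_add_right (Measure.le_add_right (Measure.le_add_left le_rfl))
  have hvω : νm ≤ ω := by
    rw [hωdef]
    exact Measure.le_add_right (Measure.le_add_left le_rfl)
  have hwω : mν.snd ≤ ω := by
    rw [hωdef]
    exact Measure.le_add_left le_rfl
  set b := β.rnDeriv ω with hbdef
  set r := res2.rnDeriv ω with hrdef
  have hbmeas : Measurable b := Measure.measurable_rnDeriv β ω
  have hrmeas : Measurable r := Measure.measurable_rnDeriv res2 ω
  have hb : ω.withDensity b = β :=
    Measure.withDensity_rnDeriv_eq _ _ (Measure.absolutelyContinuous_of_le hβω)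
  have hr : ω.withDensity r = res2 :=
    Measure.withDensity_rnDeriv_eq _ _ (Measure.absolutelyContinuous_of_le hrω)
  have hv : ω.withDensity (νm.rnDeriv ω) = νm :=
    Measure.withDensity_rnDeriv_eq _ _ (Measure.absolutelyContinuous_of_le hvω)
  have hw : ω.withDensity ((mν.snd).rnDeriv ω) = mν.snd :=
    Measure.withDensity_rnDeriv_eq _ _ (Measure.absolutelyContinuous_of_le hwω)
  have hbw_rv : b + (mν.snd).rnDeriv ω =ᵐ[ω] r + νm.rnDeriv ω := by
    have h1 := Measure.rnDeriv_add β mν.snd ω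
    have h2 := Measure.rnDeriv_add res2 νm ω
    have h3 : (β + mν.snd).rnDeriv ω = (res2 + νm).rnDeriv ω := by
      rw [hβsum, hres2]
    exact (h1.symm.trans (h3 ▸ h2 : (β + mν.snd).rnDeriv ω =ᵐ[ω] r + νm.rnDeriv ω))
  set σm := ω.withDensity (fun a => b a - r a) with hσdef
  set τm := ω.withDensity (fun a => r a - b a) with hτdef
  have hβτ : β + τm = res2 + σm := by
    rw [← hb, ← hr, hσdef, hτdef, ← withDensity_add_left hbmeas, ← withDensity_add_left hrmeas]
    apply withDensity_congr_ae
    filter_upwards with a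
    rcases le_total (b a) (r a) with h | h
    · simp only [Pi.add_apply]
      rw [add_tsub_cancel_of_le h, tsub_eq_zero_of_le h, add_zero]
    · simp only [Pi.add_apply]
      rw [add_tsub_cancel_of_le h, tsub_eq_zero_of_le h, add_zero]
  have hσν : σm ≤ νm := by
    rw [← hv, hσdef]
    refine withDensity_mono ?_
    filter_upwards [hbw_rv] with a ha
    have : b a ≤ r a + νm.rnDeriv ω a := by
      calc b a ≤ b a + (mν.snd).rnDeriv ω a := le_self_add
        _ = r a + νm.rnDeriv ω a := ha
    exact tsub_le_iff_left.mpr this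
  have hτw : τm ≤ mν.snd := by
    rw [← hw, hτdef]
    refine withDensity_mono ?_
    filter_upwards [hbw_rv] with a ha
    have : r a ≤ b a + (mν.snd).rnDeriv ω a := by
      calc r a ≤ r a + νm.rnDeriv ω a := le_self_add
        _ = b a + (mν.snd).rnDeriv ω a := ha.symm
    exact tsub_le_iff_left.mpr this
  have hσβ : σm ≤ β := by
    rw [← hb, hσdef]
    exact withDensity_mono (Filter.Eventually.of_forall fun a => tsub_le_self)
  have hτr : τm ≤ res2 := by
    rw [← hr, hτdef]
    exact withDensity_mono (Filter.Eventually.of_forall fun a => tsub_le_self)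
  set s := σm Set.univ with hsdef
  have hsle : s ≤ 1 - θ := by
    rw [hsdef, ← hβU]; exact Measure.le_iff'.mp hσβ Set.univ
  have hsne : s ≠ ∞ := (lt_of_le_of_lt (hsle.trans tsub_le_self) ENNReal.one_lt_top).ne
  haveI : IsFiniteMeasure σm :=
    ⟨lt_of_le_of_lt (Measure.le_iff'.mp hσβ Set.univ) (measure_lt_top β _)⟩
  haveI : IsFiniteMeasure τm :=
    ⟨lt_of_le_of_lt (Measure.le_iff'.mp hτr Set.univ) (measure_lt_top res2 _)⟩
  have hsτ : τm Set.univ = s := by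
    have h1 : β Set.univ + τm Set.univ = res2 Set.univ + σm Set.univ := by
      rw [← Measure.add_apply, ← Measure.add_apply, hβτ]
    rw [hβU, hres2U] at h1
    have hfin : (1:ℝ≥0∞) - θ ≠ ∞ := (lt_of_le_of_lt tsub_le_self ENNReal.one_lt_top).ne
    exact (ENNReal.add_right_inj hfin).mp h1
  -- second disintegration
  set γsw := γ1.map Prod.swap with hγswdef
  haveI : IsFiniteMeasure γsw :=
    ⟨by rw [hγswdef, Measure.map_apply measurable_swap MeasurableSet.univ]
        exact measure_lt_top γ1 _⟩
  have hγswfst : γsw.fst = β := by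
    rw [hγswdef, Measure.fst, Measure.map_map measurable_fst measurable_swap, hβdef, Measure.snd]
    rfl
  set κ' := γsw.condKernel with hκ'def
  have hdis2 : β ⊗ₘ κ' = γsw := by
    rw [← hγswfst, hκ'def]; exact Measure.IsCondKernel.disintegrate
  set γ1' := (σm ⊗ₘ κ').map Prod.swap with hγ1'def
  have hγ1'le : γ1' ≤ γ1 := by
    have h1 : σm ⊗ₘ κ' ≤ γsw := by
      rw [← hdis2]; exact compProd_mono_left κ' hσβ
    have h2 : γ1' ≤ γsw.map Prod.swap := by
      rw [hγ1'def]; exact Measure.map_mono h1 measurable_swap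
    have h3 : γsw.map Prod.swap = γ1 := by
      rw [hγswdef, Measure.map_map measurable_swap measurable_swap]
      simp [Prod.swap_swap_eq]
    rwa [h3] at h2
  have hγ1'snd : γ1'.snd = σm := by
    have h4 : (Prod.snd ∘ Prod.swap : E × E → E) = Prod.fst := rfl
    rw [hγ1'def, Measure.snd, Measure.map_map measurable_snd measurable_swap, h4, ← Measure.fst]
    exact Measure.fst_compProd σm κ'
  set αm := γ1'.fst with hαdef
  have hγ1'U : γ1' Set.univ = s := by
    rw [← Measure.snd_univ, hγ1'snd, hsdef]
  have hαU : αm Set.univ = s := by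
    rw [hαdef, Measure.fst_univ, hγ1'U]
  haveI : IsFiniteMeasure γ1' :=
    ⟨by rw [hγ1'U]; exact hsne.lt_top⟩
  set δm := γ1 - γ1' with hδdef
  have hδ : δm + γ1' = γ1 := Measure.sub_add_cancel_of_le hγ1'le
  have hδle : δm ≤ γ1 := Measure.sub_le
  have hδU : δm Set.univ = (1 - θ) - s := by
    rw [hδdef, Measure.sub_apply MeasurableSet.univ hγ1'le, hγ1'U, ← Measure.fst_univ, hfstγ1,
      hres1U]
  -- concentration sets
  set CL : ℝ := ρ * dist z1 z2 + R with hCLdef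
  have hCL_R' : CL ≤ R' := by
    have h1 : ρ * dist z1 z2 ≤ ρ * R' := mul_le_mul_of_nonneg_left hdR hρ0.le
    have h2 : ρ * R' + R ≤ R' := by nlinarith [hR'eq]
    calc CL = ρ * dist z1 z2 + R := hCLdef
      _ ≤ ρ * R' + R := by linarith
      _ ≤ R' := h2
  set Bc := {p : E × E | dist p.1 p.2 ≤ CL} with hBcdef
  have hBcm : MeasurableSet Bc := by
    have hcont : Continuous fun p : E × E => dist p.1 p.2 := continuous_fst.dist continuous_snd
    exact measurableSet_le hcont.measurable measurable_const
  have hγBc : γ Bcᶜ = 0 := by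
    rw [hγdef, Measure.map_apply hpair hBcm.compl]
    have hempty : (fun e => (f z1 x e, f z2 x e)) ⁻¹' Bcᶜ = ∅ := by
      ext e
      simp only [Set.mem_preimage, Set.mem_compl_iff, Set.mem_empty_iff_false, iff_false,
        not_not, hBcdef, Set.mem_setOf_eq]
      exact hDz e
    rw [hempty, measure_empty]
  set B2 := Metric.closedBall z2 K with hB2def
  have hνmB2 : νm B2ᶜ = 0 := by
    have hν2 : νx B2ᶜ = 0 := by
      rw [measure_compl measurableSet_closedBall (measure_ne_top _ _), hb2]
      simp
    rw [hνmdef]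
    simp [hν2]
  set B' := Metric.closedBall z2 (K + R') with hB'def
  have hsub1 : (Prod.fst ⁻¹' B'ᶜ : Set (E × E)) ⊆ Bcᶜ ∪ Prod.snd ⁻¹' B2ᶜ := by
    intro p hp
    simp only [Set.mem_preimage, Set.mem_compl_iff, hB'def, Metric.mem_closedBall] at hp
    by_contra hcon
    simp only [Set.mem_union, Set.mem_compl_iff, Set.mem_preimage, not_or, not_not] at hcon
    obtain ⟨h1, h2⟩ := hcon
    simp only [hBcdef, Set.mem_setOf_eq] at h1
    simp only [hB2def, Metric.mem_closedBall] at h2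
    exact hp (by calc dist p.1 z2 ≤ dist p.1 p.2 + dist p.2 z2 := dist_triangle _ _ _
      _ ≤ CL + K := add_le_add h1 h2
      _ ≤ R' + K := by linarith
      _ = K + R' := by ring)
  have hsub2 : (Prod.snd ⁻¹' B'ᶜ : Set (E × E)) ⊆ Bcᶜ ∪ Prod.fst ⁻¹' B2ᶜ := by
    intro p hp
    simp only [Set.mem_preimage, Set.mem_compl_iff, hB'def, Metric.mem_closedBall] at hp
    by_contra hcon
    simp only [Set.mem_union, Set.mem_compl_iff, Set.mem_preimage, not_or, not_not] at hcon
    obtain ⟨h1, h2⟩ := hcon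
    simp only [hBcdef, Set.mem_setOf_eq] at h1
    simp only [hB2def, Metric.mem_closedBall] at h2
    exact hp (by calc dist p.2 z2 ≤ dist p.2 p.1 + dist p.1 z2 := dist_triangle _ _ _
      _ = dist p.1 p.2 + dist p.1 z2 := by rw [dist_comm]
      _ ≤ CL + K := add_le_add h1 h2
      _ ≤ R' + K := by linarith
      _ = K + R' := by ring)
  have hB'm : MeasurableSet (B' : Set E) := measurableSet_closedBall
  have hαB' : αm B'ᶜ = 0 := by
    rw [hαdef, Measure.fst_apply hB'm.compl]
    refine le_antisymm ?_ zero_le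
    calc γ1' (Prod.fst ⁻¹' B'ᶜ) ≤ γ1' (Bcᶜ ∪ Prod.snd ⁻¹' B2ᶜ) := measure_mono hsub1
      _ ≤ γ1' Bcᶜ + γ1' (Prod.snd ⁻¹' B2ᶜ) := measure_union_le _ _
      _ ≤ γ Bcᶜ + σm B2ᶜ := by
          refine add_le_add ?_ ?_
          · exact Measure.le_iff'.mp (hγ1'le.trans hγ1le) _
          · rw [← Measure.snd_apply (measurableSet_closedBall).compl, hγ1'snd]
      _ ≤ 0 + νm B2ᶜ := by
          refine add_le_add ?_ (Measure.le_iff'.mp hσν _)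
          rw [hγBc]
      _ = 0 := by rw [hνmB2, add_zero]
  have hτB' : τm B'ᶜ = 0 := by
    refine le_antisymm ?_ zero_le
    calc τm B'ᶜ ≤ mν.snd B'ᶜ := Measure.le_iff'.mp hτw _
      _ = mν (Prod.snd ⁻¹' B'ᶜ) := Measure.snd_apply hB'm.compl
      _ ≤ mν (Bcᶜ ∪ Prod.fst ⁻¹' B2ᶜ) := measure_mono hsub2
      _ ≤ mν Bcᶜ + mν (Prod.fst ⁻¹' B2ᶜ) := measure_union_le _ _
      _ ≤ γ Bcᶜ + νm B2ᶜ := by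
          refine add_le_add (Measure.le_iff'.mp hmνle _) ?_
          rw [← Measure.fst_apply (measurableSet_closedBall).compl, hmνfst]
      _ = 0 := by rw [hγBc, hνmB2, add_zero]
  have hδBc : δm Bcᶜ = 0 := by
    refine le_antisymm ?_ zero_le
    calc δm Bcᶜ ≤ γ Bcᶜ := Measure.le_iff'.mp (hδle.trans hγ1le) _
      _ = 0 := hγBc
  -- modulus facts
  set D' : ℝ := 2*(R' + K) with hD'def
  have hCLD' : CL ≤ D' := by
    calc CL ≤ R' := hCL_R'
      _ ≤ D' := by rw [hD'def]; linarith
  have hpairball : ∀ a bb : E, a ∈ B' → bb ∈ B' → dist a bb ≤ D' := by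
    intro a bb ha hbb
    rw [hB'def, Metric.mem_closedBall] at ha hbb
    calc dist a bb ≤ dist a z2 + dist z2 bb := dist_triangle _ _ _
      _ = dist a z2 + dist bb z2 := by rw [dist_comm z2 bb]
      _ ≤ (K + R') + (K + R') := add_le_add ha hbb
      _ = D' := by rw [hD'def]; ring
  -- integral identities
  have hI1 : ∫⁻ e, ψ (f z1 x e) ∂mEps = ∫⁻ z, ψ z ∂μ1 :=
    (lintegral_map hψ (measurable_sliceB' hf z1 x)).symm
  have hI2 : ∫⁻ e, ψ (f z2 x e) ∂mEps = ∫⁻ z, ψ z ∂μ2 :=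
    (lintegral_map hψ (measurable_sliceB' hf z2 x)).symm
  have hdec1 : ∫⁻ z, ψ z ∂μ1 = ∫⁻ z, ψ z ∂res1 + ∫⁻ z, ψ z ∂νm := by
    rw [← hres1, lintegral_add_measure]
  have hdec2 : ∫⁻ z, ψ z ∂μ2 = ∫⁻ z, ψ z ∂res2 + ∫⁻ z, ψ z ∂νm := by
    rw [← hres2, lintegral_add_measure]
  have hres1int : ∫⁻ z, ψ z ∂res1 = ∫⁻ p, ψ p.1 ∂γ1 := by
    rw [← hfstγ1, Measure.fst, lintegral_map hψ measurable_fst]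
  have hsplit1 : ∫⁻ p, ψ p.1 ∂γ1 = ∫⁻ p, ψ p.1 ∂δm + ∫⁻ p, ψ p.1 ∂γ1' := by
    rw [← hδ, lintegral_add_measure]
  have hαint : ∫⁻ p, ψ p.1 ∂γ1' = ∫⁻ z, ψ z ∂αm := by
    rw [hαdef, Measure.fst, lintegral_map hψ measurable_fst]
  have hβint : ∫⁻ z, ψ z ∂β = ∫⁻ p, ψ p.2 ∂γ1 := by
    rw [hβdef, Measure.snd, lintegral_map hψ measurable_snd]
  have hsplit2 : ∫⁻ p, ψ p.2 ∂γ1 = ∫⁻ p, ψ p.2 ∂δm + ∫⁻ p, ψ p.2 ∂γ1' := by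
    rw [← hδ, lintegral_add_measure]
  have hσint : ∫⁻ p, ψ p.2 ∂γ1' = ∫⁻ z, ψ z ∂σm := by
    rw [← hγ1'snd, Measure.snd, lintegral_map hψ measurable_snd]
  -- bound 1
  have hδbound : ∫⁻ p, ψ p.1 ∂δm ≤ ∫⁻ p, ψ p.2 ∂δm + c * δm Set.univ := by
    have hae : ∀ᵐ p ∂δm, p ∈ Bc := mem_ae_iff.mpr hδBc
    calc ∫⁻ p, ψ p.1 ∂δm ≤ ∫⁻ p, (ψ p.2 + c) ∂δm := by
          refine lintegral_mono_ae (hae.mono fun p hp => ?_)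
          exact hmod _ _ (le_trans hp hCLD')
      _ = ∫⁻ p, ψ p.2 ∂δm + c * δm Set.univ := by
          rw [lintegral_add_right _ measurable_const, lintegral_const]
  -- bound 2
  have hαbound : ∫⁻ z, ψ z ∂αm ≤ ∫⁻ z, ψ z ∂τm + c * s := by
    by_cases hs0 : s = 0
    · have : αm = 0 := Measure.measure_univ_eq_zero.mp (hαU.trans hs0)
      rw [this]
      simp
    · have haeα : ∀ᵐ a ∂αm, a ∈ B' := mem_ae_iff.mpr hαB'
      have haeτ : ∀ᵐ bb ∂τm, bb ∈ B' := mem_ae_iff.mpr hτB'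
      have key : (∫⁻ z, ψ z ∂αm) * s ≤ (∫⁻ z, ψ z ∂τm + c * s) * s := by
        calc (∫⁻ z, ψ z ∂αm) * s = ∫⁻ a, ψ a * s ∂αm := (lintegral_mul_const s hψ).symm
          _ = ∫⁻ a, ∫⁻ _, ψ a ∂τm ∂αm := by
              congr 1
              funext a
              rw [lintegral_const, hsτ]
          _ ≤ ∫⁻ _, (∫⁻ z, ψ z ∂τm + c * s) ∂αm := by
              refine lintegral_mono_ae (haeα.mono fun a ha => ?_)
              calc ∫⁻ _, ψ a ∂τm ≤ ∫⁻ bb, (ψ bb + c) ∂τm := by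
                    refine lintegral_mono_ae (haeτ.mono fun bb hbb => ?_)
                    exact hmod a bb (hpairball a bb ha hbb)
                _ = ∫⁻ z, ψ z ∂τm + c * s := by
                    rw [lintegral_add_right _ measurable_const, lintegral_const, hsτ]
          _ = (∫⁻ z, ψ z ∂τm + c * s) * s := by rw [lintegral_const, hαU]
      exact (ENNReal.mul_le_mul_iff_left hs0 hsne).mp key
  -- cancellation identity
  have hσfin : ∫⁻ z, ψ z ∂σm ≠ ∞ := by
    have h1 : ∫⁻ z, ψ z ∂σm ≤ σm Set.univ := by
      calc ∫⁻ z, ψ z ∂σm ≤ ∫⁻ _, 1 ∂σm := lintegral_mono hψ1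
        _ = σm Set.univ := by rw [lintegral_const, one_mul]
    exact (lt_of_le_of_lt h1 hsne.lt_top).ne
  have hE1 : ∫⁻ p, ψ p.2 ∂δm + ∫⁻ z, ψ z ∂τm = ∫⁻ z, ψ z ∂res2 := by
    have h1 : ∫⁻ z, ψ z ∂β + ∫⁻ z, ψ z ∂τm = ∫⁻ z, ψ z ∂res2 + ∫⁻ z, ψ z ∂σm := by
      rw [← lintegral_add_measure, ← lintegral_add_measure, hβτ]
    have h2 : ∫⁻ z, ψ z ∂β = ∫⁻ p, ψ p.2 ∂δm + ∫⁻ z, ψ z ∂σm := by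
      rw [hβint, hsplit2, hσint]
    rw [h2] at h1
    have h3 : ∫⁻ z, ψ z ∂σm + (∫⁻ p, ψ p.2 ∂δm + ∫⁻ z, ψ z ∂τm)
        = ∫⁻ z, ψ z ∂σm + ∫⁻ z, ψ z ∂res2 := by
      calc ∫⁻ z, ψ z ∂σm + (∫⁻ p, ψ p.2 ∂δm + ∫⁻ z, ψ z ∂τm)
          = ∫⁻ p, ψ p.2 ∂δm + ∫⁻ z, ψ z ∂σm + ∫⁻ z, ψ z ∂τm := by ring
        _ = ∫⁻ z, ψ z ∂res2 + ∫⁻ z, ψ z ∂σm := h1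
        _ = ∫⁻ z, ψ z ∂σm + ∫⁻ z, ψ z ∂res2 := by ring
    exact (ENNReal.add_right_inj hσfin).mp h3
  have hE2 : δm Set.univ + s = 1 - θ := by
    rw [hδU]
    exact tsub_add_cancel_of_le hsle
  -- final assembly
  calc ∫⁻ e, ψ (f z1 x e) ∂mEps
      = ∫⁻ z, ψ z ∂νm + (∫⁻ p, ψ p.1 ∂δm + ∫⁻ z, ψ z ∂αm) := by
        rw [hI1, hdec1, hres1int, hsplit1, hαint]; ring
    _ ≤ ∫⁻ z, ψ z ∂νm + ((∫⁻ p, ψ p.2 ∂δm + c * δm Set.univ) + (∫⁻ z, ψ z ∂τm + c * s)) :=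
        add_le_add_right (add_le_add hδbound hαbound) _
    _ = ∫⁻ z, ψ z ∂νm + ((∫⁻ p, ψ p.2 ∂δm + ∫⁻ z, ψ z ∂τm) + c * (δm Set.univ + s)) := by
        ring
    _ = ∫⁻ z, ψ z ∂νm + (∫⁻ z, ψ z ∂res2 + c * (1 - θ)) := by rw [hE1, hE2]
    _ = (∫⁻ z, ψ z ∂μ2) + (1 - θ) * c := by rw [hdec2]; ring
    _ = (∫⁻ e, ψ (f z2 x e) ∂mEps) + (1 - θ) * c := by rw [hI2]

end Stmt14Aux

end StepB


set_option maxHeartbeats 2000000 in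
theorem stmt_14 {E : Type*} [MetricSpace E] [PolishSpace E]
    [MeasurableSpace E] [BorelSpace E]
    {F : Type*} [MeasurableSpace F] {k : ℕ} (hk : 1 ≤ k)
    (f : E → F → (Fin k → ℝ) → E)
    (hf : Measurable fun p : E × F × (Fin k → ℝ) => f p.1 p.2.1 p.2.2)
    (mEps : Measure (Fin k → ℝ)) [IsProbabilityMeasure mEps]
    -- Assumption D
    (ρ R : ℝ) (hρ : ρ ∈ Set.Ioo (0:ℝ) 1) (hR : 0 < R)
    (hD : ∀ (y₁ y₂ : E) (x : F) (e : Fin k → ℝ),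
      dist (f y₁ x e) (f y₂ x e) ≤ ρ * dist y₁ y₂ + R)
    -- Assumption M
    (η : F → ℝ) (hη : ∀ x, η x ∈ Set.Ioc (0:ℝ) 1) (K : ℝ) (hK : 0 < K)
    (ν : F → E → E → Measure E) (hνprob : ∀ x y₁ y₂, IsProbabilityMeasure (ν x y₁ y₂))
    (hνmeas : ∀ A : Set E, MeasurableSet A →
      Measurable fun p : F × E × E => ν p.1 p.2.1 p.2.2 A)
    (hmin : ∀ (x : F) (y₁ y₂ : E), 0 < dist y₁ y₂ → dist y₁ y₂ ≤ 2 * R / (1 - ρ) →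
      (∀ A : Set E, MeasurableSet A →
        ENNReal.ofReal (η x) * ν x y₁ y₂ A ≤ Measure.map (fun e => f y₁ x e) mEps A ∧
        ENNReal.ofReal (η x) * ν x y₁ y₂ A ≤ Measure.map (fun e => f y₂ x e) mEps A) ∧
      ν x y₁ y₂ (Metric.closedBall y₁ K) = 1 ∧ ν x y₁ y₂ (Metric.closedBall y₂ K) = 1)
    -- choice of N
    (N : ℕ) (hN : 1 ≤ N)
    (hNbig : ((1 + ρ) / 2) ^ (N - 1)
      ≤ (2 * R / (1 - ρ)) / (4 * (2 * R / (1 - ρ)) + 4 * K)) :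
    ∀ n : ℕ, 2 ≤ n → ∀ (x : ℕ → F) (y y' : E) (A : Set E), MeasurableSet A →
      |(mcreIter f mEps x n y A).toReal - (mcreIter f mEps x n y' A).toReal|
        ≤ (if (2 * R / (1 - ρ)) / ((1 + ρ) / 2) ^ (n / 2) ≤ dist y y' then 1 else 0)
          + ∏ j ∈ Finset.Icc 1 (((n + 1) / 2) / N), (1 - η (x (n / 2 + j * N - 1))) := by
  classical
  obtain ⟨hρ0, hρ1⟩ := hρ
  have h1ρ : (0:ℝ) < 1 - ρ := by linarith
  intro n hn x y y' A hA
  set ρ' : ℝ := (1 + ρ) / 2 with hρ'def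
  set R' : ℝ := 2 * R / (1 - ρ) with hR'def
  have hR'pos : 0 < R' := div_pos (by linarith) h1ρ
  have hR'eq : (1 - ρ) * R' = 2 * R := by rw [hR'def]; field_simp
  have hρ'pos : 0 < ρ' := by rw [hρ'def]; linarith
  have hρ'lt1 : ρ' < 1 := by rw [hρ'def]; linarith
  have hρρ' : ρ ≤ ρ' := by rw [hρ'def]; linarith
  set nh := n / 2 with hnhdef
  set kstar := ((n + 1) / 2) / N with hkstardef
  -- the backward value functions
  set ψfun : ℕ → E → ℝ≥0∞ :=
    fun t z => Stmt14Aux.valIt f mEps (A.indicator 1) (fun i => x (i + t)) (n - t) z with hψdef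
  have hψmeas : ∀ t, Measurable (ψfun t) := fun t =>
    Stmt14Aux.valIt_measurable hf (measurable_one.indicator hA) _ _
  have hind1 : ∀ z : E, A.indicator (1 : E → ℝ≥0∞) z ≤ 1 := by
    intro z
    by_cases hz : z ∈ A <;> simp [hz]
  have hψle1 : ∀ t z, ψfun t z ≤ 1 := fun t z =>
    Stmt14Aux.valIt_le_one hind1 _ _ _
  -- one step identity
  have hstep : ∀ t, t < n → ∀ z, ψfun t z = ∫⁻ e, ψfun (t+1) (f z (x t) e) ∂mEps := by
    intro t ht z
    have hnt : n - t = (n - (t+1)) + 1 := by omega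
    show Stmt14Aux.valIt f mEps (A.indicator 1) (fun i => x (i + t)) (n - t) z = _
    rw [hnt, Stmt14Aux.valIt_step]
    have henv : (fun i => x (i + 1 + t)) = fun i => x (i + (t+1)) :=
      funext fun i => congrArg x (by omega)
    show (∫⁻ e, Stmt14Aux.valIt f mEps (A.indicator 1) (fun i => x (i + 1 + t)) (n - (t+1))
        (f z (x (0 + t)) e) ∂mEps) = _
    rw [henv, Nat.zero_add]
  -- contraction step
  have modA : ∀ t, t < n → ∀ (D D' : ℝ) (c : ℝ≥0∞), 0 ≤ D → ρ * D + R ≤ D' →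
      (∀ w1 w2, dist w1 w2 ≤ D' → ψfun (t+1) w1 ≤ ψfun (t+1) w2 + c) →
      (∀ z1 z2, dist z1 z2 ≤ D → ψfun t z1 ≤ ψfun t z2 + c) := by
    intro t ht D D' c hD0 hDD' hmod z1 z2 hz
    rw [hstep t ht z1, hstep t ht z2]
    calc ∫⁻ e, ψfun (t+1) (f z1 (x t) e) ∂mEps
        ≤ ∫⁻ e, (ψfun (t+1) (f z2 (x t) e) + c) ∂mEps := by
          refine lintegral_mono fun e => hmod _ _ ?_
          calc dist (f z1 (x t) e) (f z2 (x t) e) ≤ ρ * dist z1 z2 + R := hD z1 z2 (x t) e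
            _ ≤ ρ * D + R := by nlinarith
            _ ≤ D' := hDD'
      _ = (∫⁻ e, ψfun (t+1) (f z2 (x t) e) ∂mEps) + c := by
          rw [lintegral_add_right _ measurable_const, lintegral_const, measure_univ, mul_one]
  -- minorization step
  have modB : ∀ t, t < n → ∀ c : ℝ≥0∞, c ≠ ⊤ →
      (∀ w1 w2, dist w1 w2 ≤ 2*(R' + K) → ψfun (t+1) w1 ≤ ψfun (t+1) w2 + c) →
      (∀ z1 z2, dist z1 z2 ≤ R' →
        ψfun t z1 ≤ ψfun t z2 + (1 - ENNReal.ofReal (η (x t))) * c) := by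
    intro t ht c hc hmod z1 z2 hz
    by_cases hzz : z1 = z2
    · subst hzz; exact le_self_add
    · have hd0 : 0 < dist z1 z2 := dist_pos.mpr hzz
      obtain ⟨hminAB, _hball1, hball2⟩ := hmin (x t) z1 z2 hd0 hz
      haveI := hνprob (x t) z1 z2
      rw [hstep t ht z1, hstep t ht z2]
      exact Stmt14Aux.stepB hf hρ0 hρ1 hR hK (hη (x t)).1 (hη (x t)).2 hz
        (fun e => hD z1 z2 (x t) e)
        (fun B hB => (hminAB B hB).1) (fun B hB => (hminAB B hB).2)
        hball2 (hψmeas (t+1)) (hψle1 (t+1)) hc hmod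
  -- contraction block
  have contract : ∀ (m : ℕ) (c : ℝ≥0∞) (D : ℝ), 0 ≤ D → ∀ t, t + m ≤ n →
      (∀ w1 w2, dist w1 w2 ≤ ρ'^m * D + R'/2 → ψfun (t+m) w1 ≤ ψfun (t+m) w2 + c) →
      (∀ z1 z2, dist z1 z2 ≤ D + R'/2 → ψfun t z1 ≤ ψfun t z2 + c) := by
    intro m
    induction m with
    | zero =>
      intro c D hD0 t ht hmod z1 z2 hz
      exact hmod z1 z2 (by simpa using hz)
    | succ m ih =>
      intro c D hD0 t ht hmod
      have h1 : ∀ w1 w2, dist w1 w2 ≤ (ρ' * D) + R'/2 → ψfun (t+1) w1 ≤ ψfun (t+1) w2 + c := by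
        refine ih c (ρ' * D) (mul_nonneg hρ'pos.le hD0) (t+1) (by omega) ?_
        intro w1 w2 hw
        have hidx : t + 1 + m = t + (m+1) := by omega
        rw [hidx]
        refine hmod w1 w2 ?_
        calc dist w1 w2 ≤ ρ'^m * (ρ' * D) + R'/2 := hw
          _ = ρ'^(m+1) * D + R'/2 := by ring
      refine modA t (by omega) (D + R'/2) (ρ' * D + R'/2) c (by positivity) ?_ h1
      have hmono : ρ * D ≤ ρ' * D := by nlinarith
      nlinarith [hR'eq]
  -- attempt chain
  set Creal : ℕ → ℝ := fun j => ∏ i ∈ Finset.Icc (j+1) kstar, (1 - η (x (nh + i*N - 1)))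
    with hCrealdef
  have honeminus : ∀ i : ℕ, 0 ≤ 1 - η (x (nh + i*N - 1)) := by
    intro i; have := (hη (x (nh + i*N - 1))).2; linarith
  have hCreal_nonneg : ∀ j, 0 ≤ Creal j := fun j =>
    Finset.prod_nonneg fun i _ => honeminus i
  set C : ℕ → ℝ≥0∞ := fun j => ENNReal.ofReal (Creal j) with hCdef
  have hC_ne_top : ∀ j, C j ≠ ⊤ := fun j => ENNReal.ofReal_ne_top
  have hCkstar : C kstar = 1 := by
    rw [hCdef]
    simp only [hCrealdef]
    rw [Finset.Icc_eq_empty (by omega), Finset.prod_empty, ENNReal.ofReal_one]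
  have hCsucc : ∀ j, 1 ≤ j → j ≤ kstar →
      (1 - ENNReal.ofReal (η (x (nh + j*N - 1)))) * C j = C (j-1) := by
    intro j hj1 hjk
    have hins : Finset.Icc j kstar = insert j (Finset.Icc (j+1) kstar) := by
      ext a
      simp only [Finset.mem_Icc, Finset.mem_insert]
      omega
    have hnotmem : j ∉ Finset.Icc (j+1) kstar := by simp
    have h1 : Creal (j-1) = (1 - η (x (nh + j*N - 1))) * Creal j := by
      rw [hCrealdef]
      simp only []
      rw [show j - 1 + 1 = j from by omega, hins, Finset.prod_insert hnotmem]
    rw [hCdef]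
    simp only []
    rw [h1, ENNReal.ofReal_mul (honeminus j),
      ENNReal.ofReal_sub _ (hη (x (nh + j*N - 1))).1.le, ENNReal.ofReal_one]
  have hkN_le : kstar * N ≤ (n+1)/2 := Nat.div_mul_le_self _ _
  have hhalf : nh + kstar * N ≤ n := by
    have : n/2 + (n+1)/2 = n := by omega
    omega
  -- P j : modulus at time nh + j*N with radius 2(R'+K) and constant C j
  have descend : ∀ i, i ≤ kstar →
      ∀ w1 w2, dist w1 w2 ≤ 2*(R' + K) →
        ψfun (nh + (kstar - i)*N) w1 ≤ ψfun (nh + (kstar - i)*N) w2 + C (kstar - i) := by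
    intro i
    induction i with
    | zero =>
      intro _ w1 w2 _
      simp only [Nat.sub_zero, hCkstar]
      exact le_trans (hψle1 _ _) le_add_self
    | succ i ih =>
      intro hik w1 w2 hw
      have hik' : i ≤ kstar := by omega
      set j := kstar - i with hjdef
      have hj1 : 1 ≤ j := by omega
      have hjk : j ≤ kstar := by omega
      have hPj := ih hik'
      -- attempt time
      have htatt_lt : nh + j*N - 1 < n := by
        have hjN : j * N ≤ kstar * N := Nat.mul_le_mul_right N hjk
        omega
      have htatt1 : (nh + j*N - 1) + 1 = nh + j*N := by
        have : 1 ≤ j * N := by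
          calc 1 = 1*1 := by ring
            _ ≤ j * N := Nat.mul_le_mul hj1 hN
        omega
      have hPj' : ∀ w1 w2, dist w1 w2 ≤ 2*(R' + K) →
          ψfun ((nh + j*N - 1) + 1) w1 ≤ ψfun ((nh + j*N - 1) + 1) w2 + C j := by
        rw [htatt1]; exact hPj
      have hatt := modB (nh + j*N - 1) htatt_lt (C j) (hC_ne_top j) hPj'
      rw [hCsucc j hj1 hjk] at hatt
      -- contraction block of length N-1
      have htprev : (nh + (j-1)*N) + (N-1) = nh + j*N - 1 := by
        have : j * N = (j-1)*N + N := by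
          rw [Nat.sub_one_mul]
          have : N ≤ j * N := by
            calc N = 1*N := by ring
              _ ≤ j*N := Nat.mul_le_mul_right N hj1
          omega
        omega
      have hradius : ρ'^(N-1) * (3*R'/2 + 2*K) + R'/2 ≤ R' := by
        have h4 : (0:ℝ) < 4*R' + 4*K := by linarith
        have hD32 : (0:ℝ) ≤ 3*R'/2 + 2*K := by linarith
        have h5 : ρ'^(N-1) * (3*R'/2 + 2*K) ≤ (R'/(4*R'+4*K)) * (3*R'/2 + 2*K) := by
          apply mul_le_mul_of_nonneg_right _ hD32
          calc ρ'^(N-1) ≤ R' / (4*R' + 4*K) := hNbig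
            _ = R'/(4*R'+4*K) := by ring_nf
        have h6 : (R'/(4*R'+4*K)) * (3*R'/2 + 2*K) ≤ R'/2 := by
          rw [div_mul_eq_mul_div, div_le_iff₀ h4]
          nlinarith
        linarith
      have hmodin : ∀ w1' w2', dist w1' w2' ≤ ρ'^(N-1) * (3*R'/2 + 2*K) + R'/2 →
          ψfun ((nh + (j-1)*N) + (N-1)) w1' ≤ ψfun ((nh + (j-1)*N) + (N-1)) w2' + C (j-1) := by
        intro w1' w2' hw'
        rw [htprev]
        exact hatt w1' w2' (le_trans hw' hradius)
      have hcontr := contract (N-1) (C (j-1)) (3*R'/2 + 2*K) (by linarith) (nh + (j-1)*N)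
        (by omega) hmodin
      have hkj : kstar - (i+1) = j - 1 := by omega
      rw [hkj]
      refine hcontr w1 w2 ?_
      calc dist w1 w2 ≤ 2*(R' + K) := hw
        _ = (3*R'/2 + 2*K) + R'/2 := by ring
  have hP0 : ∀ w1 w2, dist w1 w2 ≤ 2*(R' + K) →
      ψfun nh w1 ≤ ψfun nh w2 + C 0 := by
    have := descend kstar le_rfl
    simpa using this
  -- phase 0 contraction
  have hpow_ne : ρ'^nh ≠ 0 := pow_ne_zero _ hρ'pos.ne'
  have hpow_pos : 0 < ρ'^nh := pow_pos hρ'pos _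
  have hphase0 : ∀ z1 z2, dist z1 z2 ≤ R'/ρ'^nh + R'/2 →
      ψfun 0 z1 ≤ ψfun 0 z2 + C 0 := by
    refine contract nh (C 0) (R'/ρ'^nh) (by positivity) 0 (by omega) ?_
    intro w1 w2 hw
    simp only [Nat.zero_add]
    refine hP0 w1 w2 ?_
    have heq : ρ'^nh * (R'/ρ'^nh) = R' := by field_simp
    calc dist w1 w2 ≤ ρ'^nh * (R'/ρ'^nh) + R'/2 := by simpa using hw
      _ = R' + R'/2 := by rw [heq]
      _ ≤ 2*(R' + K) := by linarith
  -- identification with mcreIter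
  have hidy : mcreIter f mEps x n y A = ψfun 0 y :=
    Stmt14Aux.mcreIter_apply_eq hf hA n x y
  have hidy' : mcreIter f mEps x n y' A = ψfun 0 y' :=
    Stmt14Aux.mcreIter_apply_eq hf hA n x y'
  have hyle1 : mcreIter f mEps x n y A ≤ 1 := by rw [hidy]; exact hψle1 0 y
  have hy'le1 : mcreIter f mEps x n y' A ≤ 1 := by rw [hidy']; exact hψle1 0 y'
  have hyne : mcreIter f mEps x n y A ≠ ⊤ := (lt_of_le_of_lt hyle1 ENNReal.one_lt_top).ne
  have hy'ne : mcreIter f mEps x n y' A ≠ ⊤ := (lt_of_le_of_lt hy'le1 ENNReal.one_lt_top).ne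
  have hyR : (mcreIter f mEps x n y A).toReal ≤ 1 := by
    calc (mcreIter f mEps x n y A).toReal ≤ (1 : ℝ≥0∞).toReal :=
        ENNReal.toReal_mono ENNReal.one_ne_top hyle1
      _ = 1 := by simp
  have hy'R : (mcreIter f mEps x n y' A).toReal ≤ 1 := by
    calc (mcreIter f mEps x n y' A).toReal ≤ (1 : ℝ≥0∞).toReal :=
        ENNReal.toReal_mono ENNReal.one_ne_top hy'le1
      _ = 1 := by simp
  have hy0 : 0 ≤ (mcreIter f mEps x n y A).toReal := ENNReal.toReal_nonneg
  have hy'0 : 0 ≤ (mcreIter f mEps x n y' A).toReal := ENNReal.toReal_nonneg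
  by_cases hcase : R' / ρ'^nh ≤ dist y y'
  · rw [if_pos hcase]
    have : |(mcreIter f mEps x n y A).toReal - (mcreIter f mEps x n y' A).toReal| ≤ 1 := by
      rw [abs_sub_le_iff]
      constructor <;> linarith
    have hprod : 0 ≤ ∏ j ∈ Finset.Icc 1 kstar, (1 - η (x (nh + j * N - 1))) :=
      Finset.prod_nonneg fun i _ => honeminus i
    linarith
  · rw [if_neg hcase]
    push_neg at hcase
    have hdle : dist y y' ≤ R'/ρ'^nh + R'/2 := by linarith
    have hdle' : dist y' y ≤ R'/ρ'^nh + R'/2 := by rw [dist_comm]; exact hdle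
    have h1 := hphase0 y y' hdle
    have h2 := hphase0 y' y hdle'
    have htoreal : ∀ u v : ℝ≥0∞, u ≤ 1 → v ≤ 1 → u ≤ v + C 0 →
        u.toReal - v.toReal ≤ Creal 0 := by
      intro u v hu hv huv
      have hvne : v ≠ ⊤ := (lt_of_le_of_lt hv ENNReal.one_lt_top).ne
      have hvC : v + C 0 ≠ ⊤ := by
        simp [ENNReal.add_ne_top, hvne, hC_ne_top 0]
      have := ENNReal.toReal_mono hvC huv
      rw [ENNReal.toReal_add hvne (hC_ne_top 0)] at this
      have hC0 : (C 0).toReal = Creal 0 := ENNReal.toReal_ofReal (hCreal_nonneg 0)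
      linarith
    have hb1 : (mcreIter f mEps x n y A).toReal - (mcreIter f mEps x n y' A).toReal
        ≤ Creal 0 := by
      rw [hidy, hidy']
      exact htoreal _ _ (hψle1 0 y) (hψle1 0 y') h1
    have hb2 : (mcreIter f mEps x n y' A).toReal - (mcreIter f mEps x n y A).toReal
        ≤ Creal 0 := by
      rw [hidy, hidy']
      exact htoreal _ _ (hψle1 0 y') (hψle1 0 y) h2
    have habs : |(mcreIter f mEps x n y A).toReal - (mcreIter f mEps x n y' A).toReal|
        ≤ Creal 0 := abs_sub_le_iff.mpr ⟨hb1, hb2⟩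
    calc |(mcreIter f mEps x n y A).toReal - (mcreIter f mEps x n y' A).toReal|
        ≤ Creal 0 := habs
      _ = 0 + ∏ j ∈ Finset.Icc 1 kstar, (1 - η (x (nh + j * N - 1))) := by
          rw [hCrealdef]; simp
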